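/- There exists a Σ_uc-admissible supervisor S such that S||G is cc-simulated by R if and only if there exists a Σ_ucr-controllability set from G to R. -/
import Mathlib


/-- An automaton with state type `S` and event alphabet `E`:
a transition relation and a set of initial states. -/
structure Automaton (S : Type) (E : Type) where
  trans : S → E → S → Prop
  init : Set S

/-- Extension of the transition relation to finite event sequences. -/
def TransSeq {S E : Type} (G : Automaton S E) : S → List E → S → Prop
  | x, [], x' => x = x'
  | x, σ :: s, x'' => ∃ x', G.trans x σ x' ∧ TransSeq G x' s x''

/-- `x` is `s`-reachable in `G`. -/
def ReachSeq {S E : Type} (G : Automaton S E) (s : List E) (x : S) : Prop :=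
  ∃ x₀ ∈ G.init, TransSeq G x₀ s x

/-- `x` is reachable in `G`. -/
def Reachable {S E : Type} (G : Automaton S E) (x : S) : Prop :=
  ∃ s : List E, ReachSeq G s x

/-- The language of an automaton: all event sequences executable from some initial state. -/
def Lang {S E : Type} (G : Automaton S E) : Set (List E) :=
  {s | ∃ x, ReachSeq G s x}

/-- `Φ` is a simulation from `G` to `R`. -/
def IsSimulation {X Z E : Type} (G : Automaton X E) (R : Automaton Z E)
    (Φ : Set (X × Z)) : Prop :=
  (∀ x₀ ∈ G.init, ∃ z₀ ∈ R.init, (x₀, z₀) ∈ Φ) ∧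
  (∀ p ∈ Φ, ∀ (σ : E), ∀ x', G.trans p.1 σ x' →
    ∃ z', R.trans p.2 σ z' ∧ (x', z') ∈ Φ)

/-- `G` is simulated by `R` (`G ⊑ R`). -/
def Simulated {X Z E : Type} (G : Automaton X E) (R : Automaton Z E) : Prop :=
  ∃ Φ, IsSimulation G R Φ

/-- `Φ` is a covariant-contravariant simulation from `G` to `R`, with required events `Sr`. -/
def IsCCSimulation {X Z E : Type} (Sr : Set E) (G : Automaton X E) (R : Automaton Z E)
    (Φ : Set (X × Z)) : Prop :=
  IsSimulation G R Φ ∧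
  (∀ p ∈ Φ, ∀ σ ∈ Sr, ∀ z', R.trans p.2 σ z' →
    ∃ x', G.trans p.1 σ x' ∧ (x', z') ∈ Φ)

/-- `G` is cc-simulated by `R` (`G ⊑_cc R`). -/
def CCSimulated {X Z E : Type} (Sr : Set E) (G : Automaton X E) (R : Automaton Z E) : Prop :=
  ∃ Φ, IsCCSimulation Sr G R Φ

/-- `Φ` is a bisimulation from `G` to `R`: both `Φ` and its inverse are simulations. -/
def IsBisimulation {X Z E : Type} (G : Automaton X E) (R : Automaton Z E)
    (Φ : Set (X × Z)) : Prop :=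
  IsSimulation G R Φ ∧ IsSimulation R G {p | (p.2, p.1) ∈ Φ}

/-- `G` is bisimilar to `R` (`G ≃ R`). -/
def Bisimilar {X Z E : Type} (G : Automaton X E) (R : Automaton Z E) : Prop :=
  ∃ Φ, IsBisimulation G R Φ

/-- `Φ` is a `Σ_uc`-simulation from `G` to `R`. -/
def IsUcSimulation {X Z E : Type} (Suc : Set E) (G : Automaton X E) (R : Automaton Z E)
    (Φ : Set (X × Z)) : Prop :=
  (∀ x₀ ∈ G.init, ∃ z₀ ∈ R.init, (x₀, z₀) ∈ Φ) ∧
  (∀ p ∈ Φ, ∀ σ ∈ Suc, ∀ x', G.trans p.1 σ x' →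
    ∃ z', R.trans p.2 σ z' ∧ (x', z') ∈ Φ)

/-- `Φ` is a `Σ_ucr`-simulation from `G` to `R`:
(initial state), (Σ_uc-forward) and (Σ_r-backward). -/
def IsUcrSimulation {X Z E : Type} (Suc Sr : Set E) (G : Automaton X E) (R : Automaton Z E)
    (Φ : Set (X × Z)) : Prop :=
  IsUcSimulation Suc G R Φ ∧
  (∀ p ∈ Φ, ∀ σ ∈ Sr, ∀ z', R.trans p.2 σ z' →
    ∃ x', G.trans p.1 σ x' ∧ (x', z') ∈ Φ)

/-- Synchronous composition `S || G`. -/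
def Sync {Y X E : Type} (S : Automaton Y E) (G : Automaton X E) : Automaton (Y × X) E where
  trans p σ q := S.trans p.1 σ q.1 ∧ G.trans p.2 σ q.2
  init := S.init ×ˢ G.init

/-- `S` is `Σ_uc`-admissible with respect to `G`. -/
def Admissible {Y X E : Type} (Suc : Set E) (S : Automaton Y E) (G : Automaton X E) : Prop :=
  ∀ p : Y × X, Reachable (Sync S G) p → ∀ σ ∈ Suc,
    (∃ x', G.trans p.2 σ x') → ∃ q, (Sync S G).trans p σ q

/-- `match_{G,R}(W, σ, W')`. -/
def MatchW {X Z E : Type} (G : Automaton X E) (R : Automaton Z E)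
    (W : Set (X × Z)) (σ : E) (W' : Set (X × Z)) : Prop :=
  ∀ p ∈ W, ∀ x', G.trans p.1 σ x' →
    ∃ z', R.trans p.2 σ z' ∧ (x', z') ∈ W'

/-- `Ecs` is a `Σ_ucr`-controllability set from `G` to `R`. -/
def ControlSet {X Z E : Type} (Suc Sr : Set E) (G : Automaton X E) (R : Automaton Z E)
    (Ecs : Set (Set (X × Z))) : Prop :=
  (∃ W₀ ∈ Ecs, ∀ x₀ ∈ G.init, ∃ z₀ ∈ R.init, (x₀, z₀) ∈ W₀) ∧
  (∀ W ∈ Ecs, ∀ σ ∈ Suc, ∃ W' ∈ Ecs, MatchW G R W σ W') ∧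
  (∀ W ∈ Ecs, ∀ p ∈ W, ∀ σ ∈ Sr, ∀ z', R.trans p.2 σ z' →
    ∃ x', ∃ W' ∈ Ecs, G.trans p.1 σ x' ∧ (x', z') ∈ W' ∧ MatchW G R W σ W')

/-- The downward closure `P(E) = ⋃_{W ∈ E} 𝒫(W)`. -/
def PE {X Z : Type} (Ecs : Set (Set (X × Z))) : Set (Set (X × Z)) :=
  {W | ∃ W' ∈ Ecs, W ⊆ W'}

/-- `⋃_{(x,z) ∈ W} {x' : x →σ x'} × {z' : z →σ z'}`. -/
def SuccSet {X Z E : Type} (G : Automaton X E) (R : Automaton Z E)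
    (W : Set (X × Z)) (σ : E) : Set (X × Z) :=
  {q | ∃ p ∈ W, G.trans p.1 σ q.1 ∧ R.trans p.2 σ q.2}

/-- The automaton `𝒜(E)` induced by a `Σ_ucr`-controllability set `Ecs`.
Its states are the members of `P(Ecs)` (enforced in the transition relation
and initial-state set). -/
def AutA {X Z E : Type} (G : Automaton X E) (R : Automaton Z E)
    (Ecs : Set (Set (X × Z))) : Automaton (Set (X × Z)) E where
  trans W σ W' :=
    W ∈ PE Ecs ∧ W' ∈ PE Ecs ∧
    (∃ p ∈ W, ∃ q ∈ W', G.trans p.1 σ q.1 ∧ R.trans p.2 σ q.2) ∧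
    MatchW G R W σ W' ∧ W' ⊆ SuccSet G R W σ
  init := {W₀ | W₀ ∈ PE Ecs ∧ W₀ ⊆ G.init ×ˢ R.init ∧
    ∀ x₀ ∈ G.init, ∃ z₀ ∈ R.init, (x₀, z₀) ∈ W₀}

/-- A deterministic automaton: a single initial state, and at most one
`σ`-successor of each state. -/
def Deterministic {S E : Type} (G : Automaton S E) : Prop :=
  (∃ x₀, G.init = {x₀}) ∧
  ∀ x (σ : E) x₁ x₂, G.trans x σ x₁ → G.trans x σ x₂ → x₁ = x₂

/-- `Φ` is uniform with respect to `Sr`. -/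
def UniformRel {X Z E : Type} (Sr : Set E) (G : Automaton X E) (R : Automaton Z E)
    (Φ : Set (X × Z)) : Prop :=
  ∀ (s : List E), ∀ p₁ ∈ Φ, ∀ p₂ ∈ Φ,
    ReachSeq G s p₁.1 → ReachSeq G s p₂.1 → ReachSeq R s p₁.2 → ReachSeq R s p₂.2 →
    ∀ σ ∈ Sr, (∃ z', R.trans p₁.2 σ z') → ∀ x₂', G.trans p₂.1 σ x₂' →
      ∃ z₂', R.trans p₂.2 σ z₂' ∧ (x₂', z₂') ∈ Φ

/-- The fixpoint operator `F_{(G,R)}`. -/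
def Fop {X Z E : Type} (Suc Sr : Set E) (G : Automaton X E) (R : Automaton Z E)
    (Ecs : Set (Set (X × Z))) : Set (Set (X × Z)) :=
  {W | W ∈ Ecs ∧
    (∀ σ ∈ Suc, ∃ W' ∈ Ecs, MatchW G R W σ W') ∧
    (∀ p ∈ W, ∀ σ ∈ Sr, ∀ z', R.trans p.2 σ z' →
      ∃ x', ∃ W' ∈ Ecs, G.trans p.1 σ x' ∧ (x', z') ∈ W' ∧ MatchW G R W σ W')}

/-- The greatest fixpoint `E↑` of `F_{(G,R)}`: the union of all post-fixpoints. -/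
def Egfp {X Z E : Type} (Suc Sr : Set E) (G : Automaton X E) (R : Automaton Z E) :
    Set (Set (X × Z)) :=
  ⋃₀ {Ecs | Ecs ⊆ Fop Suc Sr G R Ecs}

private lemma transSeq_snoc {S E : Type} (G : Automaton S E) (σ : E) :
    ∀ (s : List E) (x x' x'' : S), TransSeq G x s x' → G.trans x' σ x'' →
      TransSeq G x (s ++ [σ]) x'' := by
  intro s
  induction s with
  | nil =>
    intro x x' x'' h h'
    cases h
    exact ⟨x'', h', rfl⟩
  | cons τ t ih =>
    intro x x' x'' h h'
    obtain ⟨m, hm, hrest⟩ := h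
    exact ⟨m, hm, ih m x' x'' hrest h'⟩

private lemma reachable_step {S E : Type} (G : Automaton S E) {x x' : S} {σ : E}
    (h : Reachable G x) (h' : G.trans x σ x') : Reachable G x' := by
  obtain ⟨s, x₀, hx₀, hseq⟩ := h
  exact ⟨s ++ [σ], x₀, hx₀, transSeq_snoc G σ s x₀ x x' hseq h'⟩

/-- a `Σ_uc`-admissible supervisor with `S||G ⊑_cc R` exists iff
a `Σ_ucr`-controllability set from `G` to `R` exists. -/
theorem solvable_iff_controlSet_exists {E X Z : Type} (Suc Sr : Set E)
    (G : Automaton X E) (R : Automaton Z E)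
    (hG : G.init.Nonempty) (hR : R.init.Nonempty) :
    (∃ (Y : Type) (S : Automaton Y E), S.init.Nonempty ∧
      Admissible Suc S G ∧ CCSimulated Sr (Sync S G) R) ↔
    (∃ Ecs : Set (Set (X × Z)), ControlSet Suc Sr G R Ecs) := by
  constructor
  · rintro ⟨Y, S, ⟨y₀, hy₀⟩, hadm, Φ, ⟨⟨hinit, hfwd⟩, hbwd⟩⟩
    set W : Y → Set (X × Z) :=
      fun y => {q | Reachable (Sync S G) (y, q.1) ∧ ((y, q.1), q.2) ∈ Φ} with hW
    refine ⟨Set.range W, ⟨W y₀, ⟨y₀, rfl⟩, ?_⟩, ?_, ?_⟩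
    · intro x₀ hx₀
      have hmem : (y₀, x₀) ∈ (Sync S G).init := by
        exact Set.mk_mem_prod hy₀ hx₀
      obtain ⟨z₀, hz₀, hΦ⟩ := hinit (y₀, x₀) hmem
      exact ⟨z₀, hz₀, ⟨⟨[], (y₀, x₀), hmem, rfl⟩, hΦ⟩⟩
    · rintro Wy ⟨y, rfl⟩ σ hσ
      by_cases h : ∃ p ∈ W y, ∃ x', G.trans p.1 σ x'
      · obtain ⟨p, ⟨hre, hΦ⟩, x', hx'⟩ := h
        obtain ⟨q, hq⟩ := hadm (y, p.1) hre σ hσ ⟨x', hx'⟩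
        refine ⟨W q.1, ⟨q.1, rfl⟩, ?_⟩
        intro p₁ hp₁ x₁' hx₁'
        have hsync : (Sync S G).trans (y, p₁.1) σ (q.1, x₁') := ⟨hq.1, hx₁'⟩
        obtain ⟨z', hz', hΦ'⟩ := hfwd ((y, p₁.1), p₁.2) hp₁.2 σ (q.1, x₁') hsync
        exact ⟨z', hz', ⟨reachable_step (Sync S G) hp₁.1 hsync, hΦ'⟩⟩
      · refine ⟨W y, ⟨y, rfl⟩, ?_⟩
        intro p hp x' hx'
        exact absurd ⟨p, hp, x', hx'⟩ h
    · rintro Wy ⟨y, rfl⟩ p ⟨hre, hΦ⟩ σ hσ z' hz'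
      obtain ⟨q, hq, hΦ'⟩ := hbwd ((y, p.1), p.2) hΦ σ hσ z' hz'
      have hq' : (Sync S G).trans (y, p.1) σ (q.1, q.2) := hq
      refine ⟨q.2, W q.1, ⟨q.1, rfl⟩, hq.2, ⟨reachable_step (Sync S G) hre hq', hΦ'⟩, ?_⟩
      intro p₁ hp₁ x₁' hx₁'
      have hsync : (Sync S G).trans (y, p₁.1) σ (q.1, x₁') := ⟨hq.1, hx₁'⟩
      obtain ⟨z₁', hz₁', hΦ₁⟩ := hfwd ((y, p₁.1), p₁.2) hp₁.2 σ (q.1, x₁') hsync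
      exact ⟨z₁', hz₁', ⟨reachable_step (Sync S G) hp₁.1 hsync, hΦ₁⟩⟩
  · rintro ⟨Ecs, ⟨W₀, hW₀, hist⟩, ha, hb⟩
    set S : Automaton (Set (X × Z)) E :=
      ⟨fun V σ V' => V ∈ Ecs ∧ V' ∈ Ecs ∧ MatchW G R V σ V', {W₀}⟩ with hS
    have hreach : ∀ p : Set (X × Z) × X, Reachable (Sync S G) p → p.1 ∈ Ecs := by
      have key : ∀ (s : List E) (p q : Set (X × Z) × X),
          p.1 ∈ Ecs → TransSeq (Sync S G) p s q → q.1 ∈ Ecs := by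
        intro s
        induction s with
        | nil =>
          intro p q hp h
          cases h
          exact hp
        | cons τ t ih =>
          intro p q hp h
          obtain ⟨m, hm, hrest⟩ := h
          exact ih m q hm.1.2.1 hrest
      rintro p ⟨s, p₀, hp₀, hseq⟩
      have hp₀1 : p₀.1 ∈ Ecs := by
        have : p₀.1 ∈ S.init := hp₀.1
        have : p₀.1 = W₀ := this
        rw [this]; exact hW₀
      exact key s p₀ p hp₀1 hseq
    refine ⟨Set (X × Z), S, ⟨W₀, rfl⟩, ?_, ?_⟩
    · rintro p hp σ hσ ⟨x', hx'⟩
      obtain ⟨W', hW', hm⟩ := ha p.1 (hreach p hp) σ hσ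
      exact ⟨(W', x'), ⟨hreach p hp, hW', hm⟩, hx'⟩
    · refine ⟨{q : (Set (X × Z) × X) × Z | q.1.1 ∈ Ecs ∧ (q.1.2, q.2) ∈ q.1.1}, ⟨?_, ?_⟩, ?_⟩
      · rintro p hp
        have hp1 : p.1 = W₀ := hp.1
        obtain ⟨z₀, hz₀, hmem⟩ := hist p.2 hp.2
        refine ⟨z₀, hz₀, ?_, ?_⟩
        · rw [hp1]; exact hW₀
        · rw [hp1]; exact hmem
      · rintro p hp σ q hq
        obtain ⟨z', hz', hmem⟩ := hq.1.2.2 (p.1.2, p.2) hp.2 q.2 hq.2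
        exact ⟨z', hz', hq.1.2.1, hmem⟩
      · rintro p hp σ hσ z' hz'
        obtain ⟨x', W', hW', htr, hmem, hm⟩ := hb p.1.1 hp.1 (p.1.2, p.2) hp.2 σ hσ z' hz'
        exact ⟨(W', x'), ⟨⟨hp.1, hW', hm⟩, htr⟩, hW', hmem⟩
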